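/- Let u, v : ℝ² → ℝ be C² functions with u nowhere vanishing, and let f, g : ℝ → ℝ be C² functions with f′(x) ≠ 0 and g′(y) ≠ 0 for all x, y ∈ ℝ. Suppose v(f(x), g(y))·f′(x)·g′(y) = u(x, y) for all (x, y) ∈ ℝ². Then for every (x, y) ∈ ℝ², (v·v_XY − v_X·v_Y)/v³ evaluated at (f(x), g(y)) equals (u·u_xy − u_x·u_y)/u³ evaluated at (x, y). In particular, the differential function I₁,₁ = (u·u_xy − u_x·u_y)/u³ is invariant under the pseudo-group X = f(x), Y = g(y), U = u/(f′(x)·g′(y)), so that the equation (u·u_xy − u_x·u_y)/u³ = 1 is invariant under this pseudo-group. -/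

import Mathlib

private lemma hasDerivAt_fst' (F : ℝ × ℝ → ℝ) (hF : Differentiable ℝ F) (a b : ℝ) :
    HasDerivAt (fun X => F (X, b)) (fderiv ℝ F (a, b) (1, 0)) a := by
  have h1 : HasDerivAt (fun X : ℝ => (X, b)) ((1 : ℝ), (0 : ℝ)) a :=
    (hasDerivAt_id a).prodMk (hasDerivAt_const a b)
  exact (hF (a, b)).hasFDerivAt.comp_hasDerivAt a h1

private lemma hasDerivAt_snd' (F : ℝ × ℝ → ℝ) (hF : Differentiable ℝ F) (a b : ℝ) :
    HasDerivAt (fun Y => F (a, Y)) (fderiv ℝ F (a, b) (0, 1)) b := by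
  have h1 : HasDerivAt (fun Y : ℝ => (a, Y)) ((0 : ℝ), (1 : ℝ)) b :=
    (hasDerivAt_const b a).prodMk (hasDerivAt_id b)
  exact (hF (a, b)).hasFDerivAt.comp_hasDerivAt b h1

/-- Invariance of I₁,₁ = (u·u_xy − u_x·u_y)/u³ under X = f(x), Y = g(y),
U = u/(f′(x)·g′(y)). -/
theorem stmt_0
    (u v : ℝ → ℝ → ℝ) (f g : ℝ → ℝ)
    (hu : ContDiff ℝ 2 (Function.uncurry u))
    (hv : ContDiff ℝ 2 (Function.uncurry v))
    (hf : ContDiff ℝ 2 f) (hg : ContDiff ℝ 2 g)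
    (hu0 : ∀ x y : ℝ, u x y ≠ 0)
    (hf' : ∀ x : ℝ, deriv f x ≠ 0) (hg' : ∀ y : ℝ, deriv g y ≠ 0)
    (hrel : ∀ x y : ℝ, v (f x) (g y) * deriv f x * deriv g y = u x y) :
    ∀ x y : ℝ,
      (v (f x) (g y) * deriv (fun X : ℝ => deriv (fun Y : ℝ => v X Y) (g y)) (f x)
          - deriv (fun X : ℝ => v X (g y)) (f x) * deriv (fun Y : ℝ => v (f x) Y) (g y))
        / (v (f x) (g y)) ^ 3
      = (u x y * deriv (fun X : ℝ => deriv (fun Y : ℝ => u X Y) y) x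
          - deriv (fun X : ℝ => u X y) x * deriv (fun Y : ℝ => u x Y) y) / (u x y) ^ 3 := by
  intro x y
  set F : ℝ × ℝ → ℝ := Function.uncurry v with hF
  have hFd : Differentiable ℝ F := hv.differentiable (by norm_num)
  set Q : ℝ × ℝ → ℝ := fun p => fderiv ℝ F p (0, 1) with hQ
  have hQc : ContDiff ℝ 1 Q := (hv.fderiv_right (by norm_num)).clm_apply contDiff_const
  have hQd : Differentiable ℝ Q := hQc.differentiable one_ne_zero
  -- smoothness of f, g
  have hfd : Differentiable ℝ f := hf.differentiable (by norm_num)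
  have hgd : Differentiable ℝ g := hg.differentiable (by norm_num)
  have hf1 : ContDiff ℝ 1 (deriv f) :=
    (contDiff_succ_iff_deriv.mp (show ContDiff ℝ (1 + 1) f by exact_mod_cast hf)).2.2
  have hg1 : ContDiff ℝ 1 (deriv g) :=
    (contDiff_succ_iff_deriv.mp (show ContDiff ℝ (1 + 1) g by exact_mod_cast hg)).2.2
  set a := f x
  set b := g y
  set f1 := deriv f x with hf1e
  set g1 := deriv g y with hg1e
  set f2 := deriv (deriv f) x
  set g2 := deriv (deriv g) y
  set A := fderiv ℝ F (a, b) (1, 0) with hA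
  set B := Q (a, b) with hB
  set Cm := fderiv ℝ Q (a, b) (1, 0) with hCm
  set V := v a b with hV
  -- basic HasDerivAt facts
  have hfx : HasDerivAt f f1 x := (hfd x).hasDerivAt
  have hgy : HasDerivAt g g1 y := (hgd y).hasDerivAt
  have hf2x : HasDerivAt (deriv f) f2 x := ((hf1.differentiable one_ne_zero) x).hasDerivAt
  have hg2y : HasDerivAt (deriv g) g2 y := ((hg1.differentiable one_ne_zero) y).hasDerivAt
  -- partial derivatives of v
  have hvX : ∀ c d : ℝ, HasDerivAt (fun X => v X d) (fderiv ℝ F (c, d) (1, 0)) c := fun c d =>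
    hasDerivAt_fst' F hFd c d
  have hvY : ∀ c d : ℝ, HasDerivAt (fun Y => v c Y) (Q (c, d)) d := fun c d =>
    hasDerivAt_snd' F hFd c d
  -- rewrite of inner derivative: deriv (fun Y => v X Y) b = Q (X, b)
  have hinner : (fun X => deriv (fun Y => v X Y) b) = fun X => Q (X, b) :=
    funext fun X => (hvY X b).deriv
  -- mixed derivative of v
  have hQX : HasDerivAt (fun X => Q (X, b)) Cm a := hasDerivAt_fst' Q hQd a b
  -- LHS rewrites
  have L1 : deriv (fun X : ℝ => deriv (fun Y : ℝ => v X Y) b) a = Cm := by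
    rw [hinner]; exact hQX.deriv
  have L2 : deriv (fun X : ℝ => v X b) a = A := (hvX a b).deriv
  have L3 : deriv (fun Y : ℝ => v a Y) b = B := (hvY a b).deriv
  -- compositions with f and g
  have hvfX : HasDerivAt (fun X => v (f X) b) (A * f1) x := (hvX a b).comp x hfx
  have hvgY : HasDerivAt (fun Y => v a (g Y)) (B * g1) y := (hvY a b).comp y hgy
  have hQfX : HasDerivAt (fun X => Q (f X, b)) (Cm * f1) x := hQX.comp x hfx
  -- u_x
  have eux : (fun X => u X y) = fun X => v (f X) b * deriv f X * g1 :=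
    funext fun X => (hrel X y).symm
  have hUx : deriv (fun X : ℝ => u X y) x = (A * f1 * f1 + v a b * f2) * g1 := by
    rw [eux]
    exact (((hvfX.mul hf2x)).mul_const g1).deriv
  -- u_y
  have euy : (fun Y => u x Y) = fun Y => v a (g Y) * f1 * deriv g Y :=
    funext fun Y => (hrel x Y).symm
  have hUy : deriv (fun Y : ℝ => u x Y) y = B * g1 * f1 * g1 + v a b * f1 * g2 := by
    rw [euy]
    exact (((hvgY.mul_const f1)).mul hg2y).deriv
  -- u_xy
  have einner : (fun X => deriv (fun Y : ℝ => u X Y) y)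
      = fun X => Q (f X, b) * g1 * deriv f X * g1 + v (f X) b * deriv f X * g2 := by
    funext X
    have e : (fun Y => u X Y) = fun Y => v (f X) (g Y) * deriv f X * deriv g Y :=
      funext fun Y => (hrel X Y).symm
    rw [e]
    have h1 : HasDerivAt (fun Y => v (f X) (g Y)) (Q (f X, b) * g1) y :=
      (hvY (f X) b).comp y hgy
    exact (((h1.mul_const (deriv f X))).mul hg2y).deriv
  have hUxy : deriv (fun X : ℝ => deriv (fun Y : ℝ => u X Y) y) x
      = ((Cm * f1 * g1) * f1 + (B * g1) * f2) * g1 + ((A * f1) * f1 + v a b * f2) * g2 := by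
    rw [einner]
    have t1 : HasDerivAt (fun X => Q (f X, b) * g1 * deriv f X * g1)
        (((Cm * f1 * g1) * f1 + (Q (a, b) * g1) * f2) * g1) x :=
      ((hQfX.mul_const g1).mul hf2x).mul_const g1
    have t2 : HasDerivAt (fun X => v (f X) b * deriv f X * g2)
        (((A * f1) * f1 + v (f x) b * f2) * g2) x :=
      (hvfX.mul hf2x).mul_const g2
    exact (t1.add t2).deriv
  -- nonvanishing
  have hU : u x y = V * f1 * g1 := (hrel x y).symm
  have hV0 : V ≠ 0 := by
    intro h
    apply hu0 x y
    rw [← hrel x y, ← hV, h]; ring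
  -- conclude
  have hf10 : f1 ≠ 0 := hf' x
  have hg10 : g1 ≠ 0 := hg' y
  rw [L1, L2, L3, hUx, hUy, hUxy, hU, ← hV]
  field_simp
  ring
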